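/- arXiv:1612.06230 — 2 statements merged into one kernel-verified Lean document; each statement's English description precedes it below -/
import Mathlib

section
/- Let A ⊆ I be a Borel set with 𝓛¹(A) = 0. Then there exists a sequence (u_n) of continuously differentiable functions on I such that u_n → 0 in L²(μ) and u_n' → 𝟙_A in L²(μ), where 𝟙_A is the indicator function of A. In particular 𝟙_A ∈ Γ(0), so the tangent space to μ is {0} μ-a.e. on any Lebesgue-negligible set, in particular on the set carrying the singular part of μ. -/
open MeasureTheory Filter Set
open scoped ENNReal
open scoped Interval

/-- The indicator of any Lebesgue-null Borel set `A ⊆ I` is a `μ`-gradient of `0`: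
there are `C¹` functions `uₙ` with `uₙ → 0` and `uₙ' → 𝟙_A` in `L²(μ)`. In particular the
tangent space to `μ` is `{0}` `μ`-a.e. on the set carrying the singular part of `μ`. -/
theorem indicator_of_null_set_is_gradient_of_zero
    (a b : ℝ) (hab : a < b) (I : Set ℝ) (hI : I = Set.Ioo a b)
    (μ : Measure ℝ) [IsFiniteMeasure μ] (hμI : μ Iᶜ = 0)
    (A : Set ℝ) (hAmeas : MeasurableSet A) (hAI : A ⊆ I) (hAnull : volume A = 0) :
    ∃ u : ℕ → ℝ → ℝ, (∀ n, ContDiff ℝ 1 (u n)) ∧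
      Tendsto (fun n => eLpNorm (u n) 2 μ) atTop (nhds 0) ∧
      Tendsto (fun n =>
        eLpNorm (fun x => deriv (u n) x - Set.indicator A (fun _ => (1:ℝ)) x) 2 μ)
        atTop (nhds 0) := by
  have key : ∀ ε : ℝ≥0∞, ε ≠ 0 → ∃ u : ℝ → ℝ, ContDiff ℝ 1 u ∧
      eLpNorm u 2 μ ≤ ε ∧
      eLpNorm (fun x => deriv u x - Set.indicator A (fun _ => (1:ℝ)) x) 2 μ ≤ ε := by
    intro ε hε
    set ε1 : ℝ≥0∞ := min ε 1 with hε1def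
    have hε1pos : 0 < ε1 := lt_min (pos_iff_ne_zero.mpr hε) zero_lt_one
    have hε1top : ε1 ≠ ∞ := ne_top_of_le_ne_top ENNReal.one_ne_top (min_le_right _ _)
    have hε1le : ε1 ≤ ε := min_le_left _ _
    set δE : ℝ≥0∞ := ε1 ^ (2:ℝ) / 2 with hδEdef
    have hpow_pos : 0 < ε1 ^ (2:ℝ) := ENNReal.rpow_pos hε1pos hε1top
    have hδE0 : δE ≠ 0 := (ENNReal.div_pos hpow_pos.ne' (by simp)).ne'
    -- compact subset of A
    obtain ⟨K, hKA, hKcomp, hKd⟩ := hAmeas.exists_isCompact_diff_lt (measure_ne_top μ A) hδE0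
    have hKmeas : MeasurableSet K := hKcomp.isClosed.measurableSet
    have hKnull : volume K = 0 := measure_mono_null hKA hAnull
    -- choice of the small real bound c
    set M : ℝ≥0∞ := μ Set.univ ^ (2:ℝ≥0∞).toReal⁻¹ with hMdef
    have hMtop : M ≠ ∞ := by
      refine ENNReal.rpow_ne_top_of_nonneg (by norm_num) (measure_ne_top μ _)
    set c : ℝ := (ε1 / (M + 1)).toReal with hcdef
    have hdivtop : ε1 / (M + 1) ≠ ∞ :=
      (ENNReal.div_lt_top hε1top (by simp)).ne
    have hdiv0 : ε1 / (M + 1) ≠ 0 := by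
      refine (ENNReal.div_pos hε1pos.ne' (by simp [hMtop])).ne'
    have hc0 : 0 < c := ENNReal.toReal_pos hdiv0 hdivtop
    -- open sets
    obtain ⟨U₁, hKU₁, hU₁o, hU₁v⟩ := K.exists_isOpen_lt_of_lt (ENNReal.ofReal c)
      (by rw [hKnull]; exact ENNReal.ofReal_pos.mpr hc0)
    obtain ⟨U₂, hKU₂, hU₂o, hU₂m⟩ := K.exists_isOpen_lt_of_lt (μ K + δE)
      (ENNReal.lt_add_right (measure_ne_top μ K) hδE0)
    set U : Set ℝ := U₁ ∩ U₂ with hUdef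
    have hUo : IsOpen U := hU₁o.inter hU₂o
    have hKU : K ⊆ U := subset_inter hKU₁ hKU₂
    have hUv : volume U < ENNReal.ofReal c :=
      lt_of_le_of_lt (measure_mono inter_subset_left) hU₁v
    have hUd : μ (U \ K) < δE := by
      refine lt_of_le_of_lt (measure_mono (diff_subset_diff_left inter_subset_right)) ?_
      exact measure_diff_lt_of_lt_add hKmeas.nullMeasurableSet hKU₂ (measure_ne_top μ K) hU₂m
    -- Urysohn
    obtain ⟨g, hg0, hg1, hg01⟩ := exists_continuous_zero_one_of_isClosed
      hUo.isClosed_compl hKcomp.isClosed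
      (disjoint_left.mpr fun x hxU hxK => hxU (hKU hxK))
    -- the C¹ function
    set u : ℝ → ℝ := fun x => ∫ t in a..x, g t with hudef
    have hderiv : deriv u = ⇑g := funext fun x => g.continuous.deriv_integral ⇑g a x
    have hcd : ContDiff ℝ 1 u := by
      rw [contDiff_one_iff_deriv]
      refine ⟨fun x => (g.continuous.integral_hasStrictDerivAt a x).hasDerivAt.differentiableAt,
        ?_⟩
      rw [hderiv]; exact g.continuous
    -- uniform bound on u
    have hubound : ∀ x, ‖u x‖ ≤ c := by
      intro x
      have h1 : ‖u x‖ ≤ ∫ t in Ι a x, ‖g t‖ := by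
        exact intervalIntegral.norm_integral_le_integral_norm_uIoc
      have h2 : ∀ t, ‖g t‖ = U.indicator (fun t => ‖g t‖) t := by
        intro t
        by_cases ht : t ∈ U
        · rw [indicator_of_mem ht]
        · rw [indicator_of_notMem ht, hg0 ht, Pi.zero_apply, norm_zero]
      have h3 : (∫ t in Ι a x, ‖g t‖) = ∫ t in Ι a x ∩ U, ‖g t‖ := by
        rw [show (∫ t in Ι a x, ‖g t‖) = ∫ t in Ι a x, U.indicator (fun t => ‖g t‖) t from
          integral_congr_ae (ae_of_all _ h2), setIntegral_indicator hUo.measurableSet]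
      have hfin : volume (Ι a x ∩ U) < ∞ :=
        lt_of_le_of_lt (measure_mono inter_subset_right) (hUv.trans_le le_top)
      have h4 : (∫ t in Ι a x ∩ U, ‖g t‖) ≤ 1 * (volume (Ι a x ∩ U)).toReal := by
        refine le_trans (le_abs_self _) ?_
        refine le_trans (le_of_eq (Real.norm_eq_abs _).symm) ?_
        refine norm_setIntegral_le_of_norm_le_const hfin ?_
        intro t _
        rw [norm_norm, Real.norm_eq_abs]
        exact abs_le.mpr ⟨by linarith [(hg01 t).1], (hg01 t).2⟩
      have h5 : (volume (Ι a x ∩ U)).toReal ≤ c := by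
        refine le_trans (ENNReal.toReal_mono (by simp) (le_of_lt
          (lt_of_le_of_lt (measure_mono inter_subset_right) hUv))) ?_
        rw [ENNReal.toReal_ofReal hc0.le]
      calc ‖u x‖ ≤ ∫ t in Ι a x, ‖g t‖ := h1
        _ = ∫ t in Ι a x ∩ U, ‖g t‖ := h3
        _ ≤ 1 * (volume (Ι a x ∩ U)).toReal := h4
        _ = (volume (Ι a x ∩ U)).toReal := one_mul _
        _ ≤ c := h5
    -- first eLpNorm bound
    have hbound1 : eLpNorm u 2 μ ≤ ε := by
      refine le_trans (eLpNorm_le_of_ae_bound (ae_of_all μ hubound)) ?_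
      have hc_eq : ENNReal.ofReal c = ε1 / (M + 1) := ENNReal.ofReal_toReal hdivtop
      rw [hc_eq]
      calc M * (ε1 / (M + 1)) ≤ (M + 1) * (ε1 / (M + 1)) := by
            exact mul_le_mul_of_nonneg_right (le_add_right le_rfl) (by positivity)
        _ = ε1 := ENNReal.mul_div_cancel' (by simp) (by simp [hMtop])
        _ ≤ ε := hε1le
    -- second eLpNorm bound
    set S : Set ℝ := (A \ K) ∪ (U \ K) with hSdef
    have hSmeas : MeasurableSet S :=
      (hAmeas.diff hKmeas).union (hUo.measurableSet.diff hKmeas)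
    have hptws : ∀ x, ‖deriv u x - A.indicator (fun _ => (1:ℝ)) x‖ ≤
        ‖S.indicator (fun _ => (1:ℝ)) x‖ := by
      intro x
      rw [hderiv]
      by_cases hxK : x ∈ K
      · rw [hg1 hxK, Pi.one_apply, indicator_of_mem (hKA hxK)]
        simp
      · by_cases hxA : x ∈ A
        · have hxS : x ∈ S := Set.mem_union_left _ ⟨hxA, hxK⟩
          rw [indicator_of_mem hxA, indicator_of_mem hxS]
          rw [Real.norm_eq_abs, Real.norm_eq_abs, abs_one]
          exact abs_le.mpr ⟨by linarith [(hg01 x).1, (hg01 x).2], by linarith [(hg01 x).1, (hg01 x).2]⟩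
        · rw [indicator_of_notMem hxA, sub_zero]
          by_cases hxU : x ∈ U
          · have hxS : x ∈ S := Set.mem_union_right _ ⟨hxU, hxK⟩
            rw [indicator_of_mem hxS]
            rw [Real.norm_eq_abs, Real.norm_eq_abs, abs_one]
            exact abs_le.mpr ⟨by linarith [(hg01 x).1], (hg01 x).2⟩
          · rw [hg0 hxU, Pi.zero_apply, norm_zero]
            exact norm_nonneg _
    have hbound2 : eLpNorm (fun x => deriv u x - A.indicator (fun _ => (1:ℝ)) x) 2 μ ≤ ε := by
      refine le_trans (eLpNorm_mono hptws) ?_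
      rw [eLpNorm_indicator_const hSmeas two_ne_zero (by simp)]
      have hμS : μ S ≤ ε1 ^ (2:ℝ) := by
        refine le_trans (measure_union_le _ _) ?_
        calc μ (A \ K) + μ (U \ K) ≤ δE + δE := add_le_add hKd.le hUd.le
          _ = 2 * δE := (two_mul δE).symm
          _ = ε1 ^ (2:ℝ) := ENNReal.mul_div_cancel' (by norm_num) (by simp)
      have : μ S ^ (1 / (2:ℝ≥0∞).toReal) ≤ ε1 := by
        have h2 : (1 / (2:ℝ≥0∞).toReal) = (2:ℝ)⁻¹ := by norm_num
        rw [h2]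
        calc μ S ^ ((2:ℝ)⁻¹) ≤ (ε1 ^ (2:ℝ)) ^ ((2:ℝ)⁻¹) :=
              ENNReal.rpow_le_rpow hμS (by norm_num)
          _ = ε1 := by
              rw [← ENNReal.rpow_mul]
              norm_num
      simpa using this.trans hε1le
    exact ⟨u, hcd, hbound1, hbound2⟩
  choose v hv1 hv2 hv3 using fun n : ℕ => key ((n : ℝ≥0∞) + 1)⁻¹ (by simp)
  have hlim : Tendsto (fun n : ℕ => ((n : ℝ≥0∞) + 1)⁻¹) atTop (nhds 0) := by
    have h := ENNReal.tendsto_inv_nat_nhds_zero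
    refine tendsto_of_tendsto_of_tendsto_of_le_of_le tendsto_const_nhds h
      (fun n => zero_le) (fun n => ENNReal.inv_le_inv' (le_add_right le_rfl))
  refine ⟨v, hv1, ?_, ?_⟩
  · exact tendsto_of_tendsto_of_tendsto_of_le_of_le tendsto_const_nhds hlim
      (fun n => zero_le) (fun n => hv2 n)
  · exact tendsto_of_tendsto_of_tendsto_of_le_of_le tendsto_const_nhds hlim
      (fun n => zero_le) (fun n => hv3 n)
end

section
/- Let J ⊆ ℝ be a bounded interval and f : J → (0, ∞) a measurable function such that the measure μ with density f is finite. Then the following are equivalent: (1) ∫_J dt/f(t) < ∞; (2) every u with ∫_J u(t)² f(t) dt < ∞ satisfies ∫_J |u(t)| dt < ∞ (i.e. L²_μ(J) ⊆ L¹(J)); (3) there exists a constant C such that ∫_J |u| ≤ C (∫_J u² f)^{1/2} for all u, i.e. L²_μ(J) embeds continuously into L¹(J). -/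
open MeasureTheory Filter Set
open scoped ENNReal NNReal

lemma holder_bound (J : Set ℝ) (hJmeas : MeasurableSet J) (f u : ℝ → ℝ)
    (hfmeas : Measurable f) (hfpos : ∀ t ∈ J, 0 < f t) (hu : Measurable u) :
    ∫⁻ t in J, ENNReal.ofReal |u t| ≤
      (∫⁻ t in J, ENNReal.ofReal ((u t) ^ 2 * f t)) ^ (1/2 : ℝ) *
      (∫⁻ t in J, ENNReal.ofReal (1 / f t)) ^ (1/2 : ℝ) := by
  set φ : ℝ → ℝ≥0∞ := fun t => ENNReal.ofReal (|u t| * Real.sqrt (f t)) with hφ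
  set ψ : ℝ → ℝ≥0∞ := fun t => ENNReal.ofReal ((Real.sqrt (f t))⁻¹) with hψ
  have hφm : Measurable φ := (hu.abs.mul (hfmeas.sqrt)).ennreal_ofReal
  have hψm : Measurable ψ := (hfmeas.sqrt.inv).ennreal_ofReal
  have key : ∫⁻ t in J, (φ * ψ) t ≤
      (∫⁻ t in J, φ t ^ (2:ℝ)) ^ (1/2 : ℝ) * (∫⁻ t in J, ψ t ^ (2:ℝ)) ^ (1/2 : ℝ) :=
    ENNReal.lintegral_mul_le_Lp_mul_Lq _ (Real.holderConjugate_iff_eq_conjExponent (by norm_num) |>.2 (by norm_num)) hφm.aemeasurable hψm.aemeasurable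
  have e1 : ∫⁻ t in J, ENNReal.ofReal |u t| = ∫⁻ t in J, (φ * ψ) t := by
    refine setLIntegral_congr_fun hJmeas (fun t ht => ?_)
    have hf0 : 0 < Real.sqrt (f t) := Real.sqrt_pos.2 (hfpos t ht)
    simp only [Pi.mul_apply, hφ, hψ]
    rw [← ENNReal.ofReal_mul (by positivity)]
    rw [mul_assoc, mul_inv_cancel₀ hf0.ne', mul_one]
  have e2 : ∫⁻ t in J, φ t ^ (2:ℝ) = ∫⁻ t in J, ENNReal.ofReal ((u t) ^ 2 * f t) := by
    refine setLIntegral_congr_fun hJmeas (fun t ht => ?_)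
    have hf0 : 0 ≤ f t := (hfpos t ht).le
    simp only [hφ]
    rw [ENNReal.ofReal_rpow_of_nonneg (by positivity) (by norm_num)]
    congr 1
    rw [Real.rpow_two, mul_pow, Real.sq_sqrt hf0, sq_abs]
  have e3 : ∫⁻ t in J, ψ t ^ (2:ℝ) = ∫⁻ t in J, ENNReal.ofReal (1 / f t) := by
    refine setLIntegral_congr_fun hJmeas (fun t ht => ?_)
    have hf0 : 0 ≤ f t := (hfpos t ht).le
    simp only [hψ]
    rw [ENNReal.ofReal_rpow_of_nonneg (by positivity) (by norm_num)]
    congr 1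
    rw [Real.rpow_two, one_div, inv_pow, Real.sq_sqrt hf0]
  rw [e1]
  calc ∫⁻ t in J, (φ * ψ) t ≤ _ := key
  _ = _ := by rw [e2, e3]


lemma exists_bad_u (J : Set ℝ) (hJbdd : Bornology.IsBounded J) (hJmeas : MeasurableSet J)
    (f : ℝ → ℝ) (hfmeas : Measurable f) (hfpos : ∀ t ∈ J, 0 < f t)
    (htop : ∫⁻ t in J, ENNReal.ofReal (1 / f t) = ⊤) :
    ∃ u : ℝ → ℝ, Measurable u ∧
      (∫⁻ t in J, ENNReal.ofReal ((u t) ^ 2 * f t) ≠ ⊤) ∧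
      ∫⁻ t in J, ENNReal.ofReal |u t| = ⊤ := by
  classical
  set g : ℝ → ℝ≥0∞ := fun t => ENNReal.ofReal (1 / f t) with hg
  have hgmeas : Measurable g := (hfmeas.const_div 1).ennreal_ofReal
  set ν : Measure ℝ := volume.withDensity g with hν
  have hνapp : ∀ s : Set ℝ, MeasurableSet s → ν s = ∫⁻ t in s, g t := fun s hs =>
    withDensity_apply g hs
  -- the exhausting sets
  set B : ℕ → Set ℝ := fun m => J ∩ {t | 1 / (m + 1 : ℝ) ≤ f t} with hB
  have hBmeas : ∀ m, MeasurableSet (B m) :=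
    fun m => hJmeas.inter (measurableSet_le measurable_const hfmeas)
  have hBJ : ∀ m, B m ⊆ J := fun m => inter_subset_left
  have hBmono : Monotone B := by
    intro m m' hmm t ht
    have hc : (m : ℝ) ≤ m' := Nat.cast_le.2 hmm
    have h1 : (1 : ℝ) / (m' + 1) ≤ 1 / (m + 1) := by
      apply one_div_le_one_div_of_le (by positivity)
      linarith
    exact ⟨ht.1, le_trans h1 ht.2⟩
  have hBunion : ⋃ m, B m = J := by
    apply Subset.antisymm (iUnion_subset hBJ)
    intro t ht
    obtain ⟨m, hm⟩ := exists_nat_ge (1 / f t)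
    refine mem_iUnion.2 ⟨m, ht, ?_⟩
    have hft := hfpos t ht
    show 1 / (m + 1 : ℝ) ≤ f t
    rw [div_le_iff₀ hft] at hm
    rw [div_le_iff₀ (show (0:ℝ) < m + 1 by positivity)]
    nlinarith
  have hJvol : volume J ≠ ⊤ := hJbdd.measure_lt_top.ne
  set F : ℕ → ℝ≥0∞ := fun m => ν (B m) with hF
  have hFfin : ∀ m, F m ≠ ⊤ := by
    intro m
    have hle : F m ≤ ENNReal.ofReal (m + 1) * volume (B m) := by
      rw [show F m = ∫⁻ t in B m, g t from hνapp _ (hBmeas m)]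
      calc ∫⁻ t in B m, g t ≤ ∫⁻ _ in B m, ENNReal.ofReal (m + 1) := by
            refine setLIntegral_mono measurable_const fun t ht => ?_
            refine ENNReal.ofReal_le_ofReal ?_
            rw [div_le_iff₀ (lt_of_lt_of_le (by positivity) ht.2)]
            have h1 : 1 / (m + 1 : ℝ) ≤ f t := ht.2
            have h2 : (0:ℝ) < m + 1 := by positivity
            rw [div_le_iff₀ h2] at h1
            nlinarith
        _ = ENNReal.ofReal (m + 1) * volume (B m) := by
            rw [setLIntegral_const]
    exact ne_top_of_le_ne_top (ENNReal.mul_ne_top ENNReal.ofReal_ne_top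
      (ne_top_of_le_ne_top hJvol (measure_mono (hBJ m)))) hle
  have hFmono : Monotone F := fun a b hab => measure_mono (hBmono hab)
  have hFsup : ⨆ m, F m = ⊤ := by
    have := Directed.measure_iUnion (μ := ν) (hBmono.directed_le)
    rw [hBunion] at this
    rw [← this, hνapp J hJmeas, ← htop]
  -- recursive choice of indices
  have hstep : ∀ j : ℕ, ∃ m, j < m ∧ 2 * F j + 1 < F m := by
    intro j
    have h1 : 2 * F j + 1 < ⊤ := by
      simp [ENNReal.add_lt_top, ENNReal.mul_lt_top, (hFfin j).lt_top]
    obtain ⟨m0, hm0⟩ := iSup_eq_top.1 hFsup _ h1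
    exact ⟨max m0 (j + 1), lt_of_lt_of_le (Nat.lt_succ_self j) (le_max_right _ _),
      lt_of_lt_of_le hm0 (hFmono (le_max_left _ _))⟩
  set n : ℕ → ℕ := fun k => Nat.rec 0 (fun _ prev => Classical.choose (hstep prev)) k with hn
  have hn2 : ∀ k, 2 * F (n k) + 1 < F (n (k + 1)) := fun k =>
    (Classical.choose_spec (hstep (n k))).2
  have hnlt : ∀ k, n k < n (k + 1) := fun k => (Classical.choose_spec (hstep (n k))).1
  have hnmono : StrictMono n := strictMono_nat_of_lt_succ hnlt
  have hpow : ∀ k, (2 : ℝ≥0∞) ^ k ≤ 1 + F (n k) := by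
    intro k
    induction k with
    | zero => simpa using le_add_right le_rfl
    | succ k ih =>
      have : (2:ℝ≥0∞) * (1 + F (n k)) ≤ 1 + F (n (k+1)) := by
        rw [mul_add, mul_one]
        calc (2:ℝ≥0∞) + 2 * F (n k) = (2 * F (n k) + 1) + 1 := by ring
          _ ≤ 1 + F (n (k+1)) := by rw [add_comm]; exact add_le_add le_rfl (hn2 k).le
      calc (2:ℝ≥0∞) ^ (k+1) = 2 * 2 ^ k := by ring
        _ ≤ 2 * (1 + F (n k)) := by gcongr
        _ ≤ 1 + F (n (k+1)) := this
  -- blocks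
  set E : ℕ → Set ℝ := fun k => Nat.casesOn k (B (n 0)) (fun j => B (n (j+1)) \ B (n j)) with hE
  have hEmeas : ∀ k, MeasurableSet (E k) := by
    intro k; cases k with
    | zero => exact hBmeas _
    | succ j => exact (hBmeas _).diff (hBmeas _)
  have hEsub : ∀ k, E k ⊆ B (n k) := by
    intro k; cases k with
    | zero => exact subset_rfl
    | succ j => exact diff_subset
  have hEdisj : Pairwise (Function.onFun Disjoint E) := by
    have key : ∀ i j, i < j → Disjoint (E i) (E j) := by
      intro i j hij
      cases j with
      | zero => omega
      | succ m =>
        have h1 : E i ⊆ B (n m) := (hEsub i).trans (hBmono (hnmono.monotone (by omega)))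
        refine Disjoint.mono_left h1 ?_
        exact disjoint_sdiff_right.symm.mono_left subset_rfl |>.symm
    intro i j hij
    rcases lt_or_gt_of_ne hij with h | h
    · exact key i j h
    · exact (key j i h).symm
  have hEunion : ⋃ k, E k = J := by
    have h1 : ∀ K, ⋃ k ≤ K, E k = B (n K) := by
      intro K
      induction K with
      | zero => simp [hE]
      | succ m ih =>
        rw [biUnion_le_succ, ih]
        exact union_diff_cancel (hBmono (hnmono.monotone (Nat.le_succ m)))
    apply Subset.antisymm
    · exact iUnion_subset fun k => (hEsub k).trans (hBJ _)
    · intro t ht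
      have : t ∈ ⋃ m, B m := hBunion.symm ▸ ht
      obtain ⟨m, hm⟩ := mem_iUnion.1 this
      have : t ∈ B (n m) := hBmono (hnmono.le_apply) hm
      have := (h1 m).symm ▸ this
      obtain ⟨k, _, hk⟩ := mem_iUnion₂.1 this
      exact mem_iUnion.2 ⟨k, hk⟩
  -- measure relation
  have hFrel : ∀ k, F (n (k+1)) = F (n k) + ν (E (k+1)) := by
    intro k
    have hsub : B (n k) ⊆ B (n (k+1)) := hBmono (hnlt k).le
    show ν (B (n (k+1))) = ν (B (n k)) + ν (B (n (k+1)) \ B (n k))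
    rw [← measure_union disjoint_sdiff_right ((hBmeas _).diff (hBmeas _)),
      union_diff_cancel hsub]
  have hdge : ∀ k, 1 + F (n k) ≤ ν (E (k+1)) := by
    intro k
    have h := hn2 k
    rw [hFrel k] at h
    have : F (n k) + (F (n k) + 1) < F (n k) + ν (E (k+1)) := by
      calc F (n k) + (F (n k) + 1) = 2 * F (n k) + 1 := by ring
        _ < F (n k) + ν (E (k+1)) := h
    rw [add_comm 1 (F (n k))]
    exact (ENNReal.add_lt_add_iff_left (hFfin _)).1 this |>.le
  have hdne0 : ∀ k, ν (E (k+1)) ≠ 0 := fun k h0 => by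
    have := hdge k; rw [h0] at this; simp at this
  have hdnetop : ∀ k, ν (E (k+1)) ≠ ⊤ := by
    intro k
    refine ne_top_of_le_ne_top (hFfin (n (k+1))) ?_
    rw [hFrel k]
    exact le_add_self
  -- coefficients
  set c : ℕ → ℝ := fun k => Nat.casesOn k 0 (fun j => (1 + (F (n (j+1))).toReal)⁻¹) with hcdef
  have hcnonneg : ∀ k, 0 ≤ c k := by
    intro k
    cases k with
    | zero => simp [hcdef]
    | succ j =>
      show (0:ℝ) ≤ (1 + (F (n (j+1))).toReal)⁻¹
      have := ENNReal.toReal_nonneg (a := F (n (j+1)))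
      positivity
  have hofc : ∀ k, ENNReal.ofReal (c (k+1)) = (1 + F (n (k+1)))⁻¹ := by
    intro k
    show ENNReal.ofReal (1 + (F (n (k+1))).toReal)⁻¹ = (1 + F (n (k+1)))⁻¹
    have hpos : (0:ℝ) < 1 + (F (n (k+1))).toReal := by
      have := ENNReal.toReal_nonneg (a := F (n (k+1))); linarith
    rw [ENNReal.ofReal_inv_of_pos hpos,
      ENNReal.ofReal_add zero_le_one ENNReal.toReal_nonneg, ENNReal.ofReal_one,
      ENNReal.ofReal_toReal (hFfin _)]
  -- index function
  set K : ℝ → ℕ := fun t => if h : ∃ k, t ∈ B (n k) then Nat.find h else 0 with hKdef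
  have hK0 : ∀ t ∈ E 0, K t = 0 := by
    intro t ht
    have hex : ∃ k, t ∈ B (n k) := ⟨0, ht⟩
    simp only [hKdef, dif_pos hex]
    exact Nat.find_eq_zero hex |>.2 ht
  have hKsucc : ∀ k, ∀ t ∈ E (k+1), K t = k + 1 := by
    intro k t ht
    have ht' : t ∈ B (n (k+1)) \ B (n k) := ht
    have hex : ∃ j, t ∈ B (n j) := ⟨k+1, ht'.1⟩
    simp only [hKdef, dif_pos hex]
    rw [Nat.find_eq_iff]
    refine ⟨ht'.1, fun j hj hjmem => ht'.2 (hBmono (hnmono.monotone (by omega)) hjmem)⟩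
  have hKpre : ∀ k, K ⁻¹' {k} = if k = 0 then B (n 0) ∪ (⋃ j, B (n j))ᶜ else E k := by
    intro k
    cases k with
    | zero =>
      simp only [if_pos rfl]
      ext t
      simp only [mem_preimage, mem_singleton_iff]
      constructor
      · intro h
        by_cases hex : ∃ j, t ∈ B (n j)
        · left
          simp only [hKdef, dif_pos hex] at h
          exact (Nat.find_eq_zero hex).1 h
        · right
          simpa using hex
      · rintro (h | h)
        · have hex : ∃ j, t ∈ B (n j) := ⟨0, h⟩
          simp only [hKdef, dif_pos hex]
          exact (Nat.find_eq_zero hex).2 h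
        · have hex : ¬∃ j, t ∈ B (n j) := by simpa using h
          simp only [hKdef, dif_neg hex]
    | succ m =>
      simp only [if_neg (Nat.succ_ne_zero m)]
      ext t
      simp only [mem_preimage, mem_singleton_iff]
      constructor
      · intro h
        by_cases hex : ∃ j, t ∈ B (n j)
        · simp only [hKdef, dif_pos hex] at h
          rw [Nat.find_eq_iff] at h
          refine ⟨h.1, fun hm => h.2 m (Nat.lt_succ_self m) hm⟩
        · simp only [hKdef, dif_neg hex] at h
          exact absurd h (Nat.succ_ne_zero m).symm
      · intro ht
        exact hKsucc m t ht
  have hKmeas : Measurable K := by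
    refine measurable_to_nat fun y => ?_
    rw [hKpre (K y)]
    split
    · exact (hBmeas _).union (MeasurableSet.iUnion (fun j => hBmeas _)).compl
    · exact hEmeas _
  -- the function
  set u : ℝ → ℝ := J.indicator (fun t => c (K t) * (f t)⁻¹) with hudef
  have humeas : Measurable u := by
    refine Measurable.indicator ?_ hJmeas
    exact ((measurable_from_top.comp hKmeas).mul hfmeas.inv)
  have hgt : ∀ t, ENNReal.ofReal (f t)⁻¹ = g t := by
    intro t; rw [hg]; simp [one_div]
  refine ⟨u, humeas, ?_, ?_⟩
  · have hsplit : ∫⁻ t in J, ENNReal.ofReal ((u t) ^ 2 * f t) =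
        ∑' k, ∫⁻ t in E k, ENNReal.ofReal ((u t) ^ 2 * f t) := by
      rw [← hEunion, lintegral_iUnion hEmeas hEdisj]
    have hterm : ∀ k, ∫⁻ t in E k, ENNReal.ofReal ((u t) ^ 2 * f t) ≤ (2⁻¹ : ℝ≥0∞) ^ k := by
      intro k
      cases k with
      | zero =>
        have hz : ∀ t ∈ E 0, ENNReal.ofReal ((u t) ^ 2 * f t) = 0 := by
          intro t ht
          have htJ : t ∈ J := hBJ _ ht
          have hu0 : u t = 0 := by
            rw [hudef, indicator_of_mem htJ, hK0 t ht]
            show (0:ℝ) * (f t)⁻¹ = 0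
            ring
          simp [hu0]
        rw [setLIntegral_congr_fun (hEmeas 0) hz]
        simp
      | succ k =>
        have hpt : ∀ t ∈ E (k+1), ENNReal.ofReal ((u t) ^ 2 * f t)
            = ENNReal.ofReal (c (k+1)) ^ 2 * g t := by
          intro t ht
          have htJ : t ∈ J := hBJ (n (k+1)) (hEsub (k+1) ht)
          have hft : 0 < f t := hfpos t htJ
          have hut : u t = c (k+1) * (f t)⁻¹ := by
            rw [hudef, indicator_of_mem htJ, hKsucc k t ht]
          rw [hut]
          have heq : (c (k+1) * (f t)⁻¹) ^ 2 * f t = (c (k+1))^2 * (f t)⁻¹ := by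
            field_simp
          rw [heq, ENNReal.ofReal_mul (by positivity), ENNReal.ofReal_pow (p := c (k+1)) (hcnonneg (k+1)),
            hgt t]
        rw [setLIntegral_congr_fun (hEmeas (k+1)) hpt, lintegral_const_mul _ hgmeas,
          ← hνapp _ (hEmeas (k+1)), hofc]
        have hbne : (1 + F (n (k+1))) ≠ ⊤ := by
          simp [ENNReal.add_eq_top, hFfin _]
        have hb0 : (1 + F (n (k+1))) ≠ 0 := by simp
        have h1 : ν (E (k+1)) ≤ 1 + F (n (k+1)) := by
          refine le_trans ?_ le_add_self
          rw [hFrel k]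
          exact le_add_self
        calc (1 + F (n (k+1)))⁻¹ ^ 2 * ν (E (k+1))
            = (1 + F (n (k+1)))⁻¹ * ((1 + F (n (k+1)))⁻¹ * ν (E (k+1))) := by ring
          _ ≤ (1 + F (n (k+1)))⁻¹ * ((1 + F (n (k+1)))⁻¹ * (1 + F (n (k+1)))) := by gcongr
          _ = (1 + F (n (k+1)))⁻¹ := by
              rw [ENNReal.inv_mul_cancel hb0 hbne, mul_one]
          _ ≤ ((2:ℝ≥0∞) ^ (k+1))⁻¹ := ENNReal.inv_le_inv' (hpow (k+1))
          _ = (2⁻¹:ℝ≥0∞) ^ (k+1) := by rw [← ENNReal.inv_pow]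
    rw [hsplit]
    refine ne_top_of_le_ne_top ?_ (ENNReal.tsum_le_tsum hterm)
    rw [ENNReal.tsum_geometric]
    rw [ENNReal.inv_ne_top]
    rw [ENNReal.one_sub_inv_two]
    simp
  · have hsplit : ∫⁻ t in J, ENNReal.ofReal |u t| =
        ∑' k, ∫⁻ t in E k, ENNReal.ofReal |u t| := by
      rw [← hEunion, lintegral_iUnion hEmeas hEdisj]
    have hterm : ∀ k, (2⁻¹:ℝ≥0∞) ≤ ∫⁻ t in E (k+1), ENNReal.ofReal |u t| := by
      intro k
      have hpt : ∀ t ∈ E (k+1), ENNReal.ofReal |u t| = ENNReal.ofReal (c (k+1)) * g t := by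
        intro t ht
        have htJ : t ∈ J := hBJ (n (k+1)) (hEsub (k+1) ht)
        have hft : 0 < f t := hfpos t htJ
        have hut : u t = c (k+1) * (f t)⁻¹ := by
          rw [hudef, indicator_of_mem htJ, hKsucc k t ht]
        have hcpos : 0 ≤ c (k+1) := hcnonneg (k+1)
        rw [hut, abs_of_nonneg (mul_nonneg hcpos (inv_nonneg.2 hft.le)),
          ENNReal.ofReal_mul hcpos, hgt t]
      rw [setLIntegral_congr_fun (hEmeas (k+1)) hpt, lintegral_const_mul _ hgmeas,
        ← hνapp _ (hEmeas (k+1)), hofc]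
      have h2d : 1 + F (n (k+1)) ≤ 2 * ν (E (k+1)) := by
        rw [hFrel k]
        calc 1 + (F (n k) + ν (E (k+1))) = (1 + F (n k)) + ν (E (k+1)) := by ring
          _ ≤ ν (E (k+1)) + ν (E (k+1)) := add_le_add (hdge k) le_rfl
          _ = 2 * ν (E (k+1)) := (two_mul _).symm
      calc (2⁻¹:ℝ≥0∞) = (2 * ν (E (k+1)))⁻¹ * ν (E (k+1)) := by
            rw [ENNReal.mul_inv (Or.inl (by norm_num)) (Or.inr (hdne0 k)), mul_assoc,
              ENNReal.inv_mul_cancel (hdne0 k) (hdnetop k), mul_one]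
        _ ≤ (1 + F (n (k+1)))⁻¹ * ν (E (k+1)) :=
            mul_le_mul' (ENNReal.inv_le_inv.2 h2d) le_rfl
    rw [hsplit, eq_top_iff]
    calc (⊤:ℝ≥0∞) = ∑' _ : ℕ, (2⁻¹:ℝ≥0∞) :=
          (ENNReal.tsum_const_eq_top_of_ne_zero (by norm_num)).symm
      _ ≤ ∑' k, ∫⁻ t in E (k+1), ENNReal.ofReal |u t| := ENNReal.tsum_le_tsum hterm
      _ ≤ ∑' k, ∫⁻ t in E k, ENNReal.ofReal |u t| :=
          ENNReal.tsum_comp_le_tsum_of_injective Nat.succ_injective _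


lemma inv_integrable_of_embed (J : Set ℝ) (hJbdd : Bornology.IsBounded J)
    (hJmeas : MeasurableSet J)
    (f : ℝ → ℝ) (hfmeas : Measurable f) (hfpos : ∀ t ∈ J, 0 < f t) (C : ℝ≥0)
    (hC : ∀ u : ℝ → ℝ, Measurable u →
      ∫⁻ t in J, ENNReal.ofReal |u t| ≤
        C * (∫⁻ t in J, ENNReal.ofReal ((u t) ^ 2 * f t)) ^ (1/2 : ℝ)) :
    ∫⁻ t in J, ENNReal.ofReal (1 / f t) ≠ ⊤ := by
  have hJvol : volume J ≠ ⊤ := hJbdd.measure_lt_top.ne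
  set v : ℕ → ℝ → ℝ := fun N t => min ((f t)⁻¹) N with hv
  have hvmeas : ∀ N, Measurable (v N) := fun N => hfmeas.inv.min measurable_const
  set A : ℕ → ℝ≥0∞ := fun N => ∫⁻ t in J, ENNReal.ofReal |v N t| with hA
  -- each A N is finite
  have hAfin : ∀ N, A N ≠ ⊤ := by
    intro N
    have hle : A N ≤ ENNReal.ofReal N * volume J := by
      rw [hA]
      calc ∫⁻ t in J, ENNReal.ofReal |v N t| ≤ ∫⁻ _ in J, ENNReal.ofReal N := by
            refine setLIntegral_mono measurable_const fun t ht => ?_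
            refine ENNReal.ofReal_le_ofReal ?_
            have hft := hfpos t ht
            have h1 : v N t = min ((f t)⁻¹) N := rfl
            have h2 : 0 ≤ v N t := by
              rw [h1]; exact le_min (by positivity) (Nat.cast_nonneg N)
            rw [abs_of_nonneg h2, h1]
            exact min_le_right _ _
        _ = ENNReal.ofReal N * volume J := by rw [setLIntegral_const]
    exact ne_top_of_le_ne_top (ENNReal.mul_ne_top ENNReal.ofReal_ne_top hJvol) hle
  -- the square integral is dominated by A N
  have hsq : ∀ N, ∫⁻ t in J, ENNReal.ofReal ((v N t) ^ 2 * f t) ≤ A N := by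
    intro N
    refine setLIntegral_mono ((hvmeas N).abs.ennreal_ofReal) fun t ht => ?_
    refine ENNReal.ofReal_le_ofReal ?_
    have hft := hfpos t ht
    have h2 : 0 ≤ v N t := le_min (by positivity) (Nat.cast_nonneg N)
    have h3 : v N t * f t ≤ 1 := by
      have : v N t ≤ (f t)⁻¹ := min_le_left _ _
      calc v N t * f t ≤ (f t)⁻¹ * f t := by gcongr
        _ = 1 := inv_mul_cancel₀ hft.ne'
    calc (v N t) ^ 2 * f t = v N t * (v N t * f t) := by ring
      _ ≤ v N t * 1 := by exact mul_le_mul_of_nonneg_left h3 h2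
      _ = v N t := mul_one _
      _ ≤ |v N t| := le_abs_self _
  -- uniform bound A N ≤ C^2
  have hAbound : ∀ N, A N ≤ (C:ℝ≥0∞) * C := by
    intro N
    have h1 : A N ≤ C * (A N) ^ (1/2 : ℝ) := by
      refine le_trans (hC (v N) (hvmeas N)) ?_
      exact mul_le_mul' le_rfl (ENNReal.rpow_le_rpow (hsq N) (by norm_num))
    by_cases h0 : A N = 0
    · rw [h0]; exact zero_le
    have hr0 : (A N) ^ (1/2 : ℝ) ≠ 0 := by
      simp [ENNReal.rpow_eq_zero_iff, h0, hAfin N]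
    have hrt : (A N) ^ (1/2 : ℝ) ≠ ⊤ := ENNReal.rpow_ne_top_of_nonneg (by norm_num) (hAfin N)
    have hself : A N = (A N) ^ (1/2 : ℝ) * (A N) ^ (1/2 : ℝ) := by
      rw [← ENNReal.rpow_add _ _ h0 (hAfin N)]
      norm_num
    have h2 : (A N) ^ (1/2 : ℝ) * (A N) ^ (1/2 : ℝ) ≤ C * (A N) ^ (1/2 : ℝ) := by
      rw [← hself]; exact h1
    have h3 : (A N) ^ (1/2 : ℝ) ≤ C := by
      exact (ENNReal.mul_le_mul_iff_left hr0 hrt).1 h2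
    calc A N = (A N) ^ (1/2 : ℝ) * (A N) ^ (1/2 : ℝ) := hself
      _ ≤ (C:ℝ≥0∞) * C := mul_le_mul' h3 h3
  -- monotone convergence
  have hmono : Monotone (fun N : ℕ => fun t : ℝ => ENNReal.ofReal (min ((f t)⁻¹) N)) := by
    intro N M hNM
    intro t
    refine ENNReal.ofReal_le_ofReal (min_le_min le_rfl ?_)
    exact_mod_cast hNM
  have hsup : ∀ t, (⨆ N : ℕ, ENNReal.ofReal (min ((f t)⁻¹) N)) = ENNReal.ofReal (1 / f t) := by
    intro t
    apply le_antisymm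
    · refine iSup_le fun N => ENNReal.ofReal_le_ofReal ?_
      rw [one_div]
      exact min_le_left _ _
    · obtain ⟨N, hN⟩ := exists_nat_ge ((f t)⁻¹)
      refine le_trans ?_ (le_iSup _ N)
      refine ENNReal.ofReal_le_ofReal ?_
      rw [one_div, min_eq_left hN]
  have hMCT : ∫⁻ t in J, ENNReal.ofReal (1 / f t) =
      ⨆ N : ℕ, ∫⁻ t in J, ENNReal.ofReal (min ((f t)⁻¹) N) := by
    rw [← lintegral_iSup (f := fun N t => ENNReal.ofReal (min ((f t)⁻¹) N)) (fun N => (hfmeas.inv.min measurable_const).ennreal_ofReal) hmono]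
    congr 1
    ext t
    rw [hsup t]
  rw [hMCT]
  refine ne_top_of_le_ne_top (b := (C:ℝ≥0∞) * C) (ENNReal.mul_ne_top ENNReal.coe_ne_top ENNReal.coe_ne_top) ?_
  refine iSup_le fun N => ?_
  refine le_trans ?_ (hAbound N)
  rw [hA]
  refine setLIntegral_mono ((hvmeas N).abs.ennreal_ofReal) fun t ht => ?_
  exact ENNReal.ofReal_le_ofReal (le_abs_self _)
/-- For a positive weight `f` on a bounded interval `J` with `f·𝓛¹` finite, the following
are equivalent: (1) `1/f ∈ L¹(J)`; (2) every `u` with `∫_J u² f < ∞` satisfies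
`∫_J |u| < ∞`; (3) `L²_μ(J)` embeds continuously into `L¹(J)`. -/
theorem weighted_L2_embeds_L1_iff_inv_integrable
    (J : Set ℝ) (hJbdd : Bornology.IsBounded J) (hJinterval : J.OrdConnected)
    (hJmeas : MeasurableSet J)
    (f : ℝ → ℝ) (hfmeas : Measurable f) (hfpos : ∀ t ∈ J, 0 < f t)
    (hfin : ∫⁻ t in J, ENNReal.ofReal (f t) ≠ ⊤) :
    ((∫⁻ t in J, ENNReal.ofReal (1 / f t) ≠ ⊤) ↔
      (∀ u : ℝ → ℝ, Measurable u →
        (∫⁻ t in J, ENNReal.ofReal ((u t) ^ 2 * f t) ≠ ⊤) →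
        ∫⁻ t in J, ENNReal.ofReal |u t| ≠ ⊤)) ∧
    ((∫⁻ t in J, ENNReal.ofReal (1 / f t) ≠ ⊤) ↔
      (∃ C : ℝ≥0, ∀ u : ℝ → ℝ, Measurable u →
        ∫⁻ t in J, ENNReal.ofReal |u t| ≤
          C * (∫⁻ t in J, ENNReal.ofReal ((u t) ^ 2 * f t)) ^ (1/2 : ℝ))) := by
  constructor
  · constructor
    · intro h1 u hu husq
      have hH := holder_bound J hJmeas f u hfmeas hfpos hu
      refine ne_top_of_le_ne_top ?_ hH
      exact ENNReal.mul_ne_top (ENNReal.rpow_ne_top_of_nonneg (by norm_num) husq)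
        (ENNReal.rpow_ne_top_of_nonneg (by norm_num) h1)
    · intro h2
      by_contra htop
      obtain ⟨u, hu, husq, habs⟩ := exists_bad_u J hJbdd hJmeas f hfmeas hfpos htop
      exact (h2 u hu husq) habs
  · constructor
    · intro h1
      refine ⟨((∫⁻ t in J, ENNReal.ofReal (1 / f t)) ^ (1/2 : ℝ)).toNNReal,
        fun u hu => ?_⟩
      have hH := holder_bound J hJmeas f u hfmeas hfpos hu
      have hne : (∫⁻ t in J, ENNReal.ofReal (1 / f t)) ^ (1/2 : ℝ) ≠ ⊤ :=
        ENNReal.rpow_ne_top_of_nonneg (by norm_num) h1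
      rw [ENNReal.coe_toNNReal hne, mul_comm]
      exact hH
    · rintro ⟨C, hC⟩
      exact inv_integrable_of_embed J hJbdd hJmeas f hfmeas hfpos C hC
end
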